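/- Let s be a positive integer, let r_1, …, r_s be positive integers, and let n_1 < n_2 < ⋯ < n_s be real numbers with n_1 ≥ 0 and, in case s ≥ 2, n_{s-1} ≤ n_s − 1. Set f(x) = (x − n_1)^{r_1} ⋯ (x − n_s)^{r_s}. Then ρ((x − n_s)·f(x) − 1) ≥ ρ(f(x) − 1), and equality ρ((x − n_s)·f(x) − 1) = ρ(f(x) − 1) holds if and only if s = 1. -/

import Mathlib

open Polynomial

/-- `rho p` is the maximum (supremum) of the moduli of the complex roots of the
real polynomial `p`. -/
noncomputable def rho (p : Polynomial ℝ) : ℝ :=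
  sSup {t : ℝ | ∃ z : ℂ, (Polynomial.aeval z) p = 0 ∧ ‖z‖ = t}

lemma one_le_prod_real {ι : Type*} (t : Finset ι) (f : ι → ℝ) (h : ∀ i ∈ t, 1 ≤ f i) :
    1 ≤ ∏ i ∈ t, f i :=
  le_trans (by simp) (Finset.prod_le_prod (fun _ _ => zero_le_one) h)

section Aux

variable {s : ℕ}

/-- Strict monotonicity of the real product function beyond all the roots. -/
lemma aux_prod_lt (hs : 0 < s) (r : Fin s → ℕ) (hr : ∀ i, 0 < r i)
    (n : Fin s → ℝ) (a b : ℝ) (ha : ∀ i, n i < a) (hab : a < b) :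
    ∏ i : Fin s, (a - n i) ^ r i < ∏ i : Fin s, (b - n i) ^ r i := by
  have : Nonempty (Fin s) := ⟨⟨0, hs⟩⟩
  refine Finset.prod_lt_prod_of_nonempty (fun i _ => ?_) (fun i _ => ?_) Finset.univ_nonempty
  · exact pow_pos (by linarith [ha i]) _
  · exact pow_lt_pow_left₀ (by linarith [ha i]) (by linarith [ha i]) (hr i).ne'

/-- Key estimate: if the product equals 1 at a real point `x` beyond all roots, then
for complex `z` with `|z| > x` the product has modulus `> 1`. -/
lemma aux_est (hs : 0 < s) (r : Fin s → ℕ) (hr : ∀ i, 0 < r i)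
    (n : Fin s → ℝ) (hn : ∀ i, 0 ≤ n i) (x : ℝ) (hx : ∀ i, n i < x)
    (hval : ∏ i : Fin s, (x - n i) ^ r i = 1)
    (z : ℂ) (hz : x < ‖z‖) :
    1 < ‖∏ i : Fin s, (z - (n i : ℂ)) ^ r i‖ := by
  have h1 : ∏ i : Fin s, (x - n i) ^ r i < ∏ i : Fin s, (‖z‖ - n i) ^ r i :=
    aux_prod_lt hs r hr n x (‖z‖) hx hz
  have h2 : ∏ i : Fin s, (‖z‖ - n i) ^ r i
      ≤ ∏ i : Fin s, (‖z - (n i : ℂ)‖) ^ r i := by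
    refine Finset.prod_le_prod (fun i _ => pow_nonneg (by linarith [hx i, hn i]) _)
      (fun i _ => pow_le_pow_left₀ (by linarith [hx i, hn i]) ?_ _)
    have h := norm_sub_norm_le z ((n i : ℂ))
    simp only [Complex.norm_of_nonneg (hn i)] at h
    linarith
  have h3 : ‖∏ i : Fin s, (z - (n i : ℂ)) ^ r i‖
      = ∏ i : Fin s, (‖z - (n i : ℂ)‖) ^ r i := by
    rw [norm_prod]
    exact Finset.prod_congr rfl fun i _ => norm_pow _ _
  rw [h3]
  calc (1 : ℝ) = ∏ i : Fin s, (x - n i) ^ r i := hval.symm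
    _ < ∏ i : Fin s, (‖z‖ - n i) ^ r i := h1
    _ ≤ _ := h2

/-- If `q.eval x = 1` with `x ≥ 0`, and every complex `z` with `|z| > x` satisfies
`aeval z q ≠ 1`, then `rho (q - 1) = x`. -/
lemma rho_eq (q : Polynomial ℝ) (x : ℝ) (hx0 : 0 ≤ x) (hq : q.eval x = 1)
    (hbig : ∀ z : ℂ, x < ‖z‖ → (Polynomial.aeval z) q ≠ 1) :
    rho (q - 1) = x := by
  have hmem : x ∈ {t : ℝ | ∃ z : ℂ, (Polynomial.aeval z) (q - 1) = 0 ∧ ‖z‖ = t} := by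
    refine ⟨(x : ℂ), ?_, Complex.norm_of_nonneg hx0⟩
    have : (Polynomial.aeval (algebraMap ℝ ℂ x)) (q - 1) = algebraMap ℝ ℂ ((aeval x) (q - 1)) :=
      aeval_algebraMap_apply ℂ x (q - 1)
    simp only [Complex.coe_algebraMap] at this
    rw [this]
    simp [hq]
  have hub : ∀ t ∈ {t : ℝ | ∃ z : ℂ, (Polynomial.aeval z) (q - 1) = 0 ∧ ‖z‖ = t},
      t ≤ x := by
    rintro t ⟨z, hz, rfl⟩
    by_contra h
    push_neg at h
    refine hbig z h ?_
    have : (Polynomial.aeval z) q - 1 = 0 := by simpa [map_sub] using hz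
    linear_combination (norm := ring_nf) this
  exact le_antisymm (csSup_le ⟨x, hmem⟩ hub) (le_csSup ⟨x, hub⟩ hmem)

end Aux

/-- With `f(x) = (x - n₁)^{r₁} ⋯ (x - n_s)^{r_s}` as before,
`ρ((x - n_s)·f(x) - 1) ≥ ρ(f(x) - 1)`, with equality if and only if `s = 1`. -/
theorem statement3 (s : ℕ) (hs : 0 < s) (r : Fin s → ℕ) (hr : ∀ i, 0 < r i)
    (n : Fin s → ℝ) (hmono : StrictMono n) (hn0 : 0 ≤ n ⟨0, hs⟩)
    (hgap : ∀ _ : 2 ≤ s, n ⟨s - 2, by omega⟩ ≤ n ⟨s - 1, by omega⟩ - 1) :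
    rho ((X - C (n ⟨s - 1, by omega⟩)) * (∏ i : Fin s, (X - C (n i)) ^ r i) - 1) ≥
        rho (∏ i : Fin s, (X - C (n i)) ^ r i - 1) ∧
      (rho ((X - C (n ⟨s - 1, by omega⟩)) * (∏ i : Fin s, (X - C (n i)) ^ r i) - 1) =
          rho (∏ i : Fin s, (X - C (n i)) ^ r i - 1) ↔ s = 1) := by
  classical
  set L : Fin s := ⟨s - 1, by omega⟩ with hL
  -- basic facts about n
  have hile : ∀ i : Fin s, n i ≤ n L := fun i =>
    hmono.monotone (by simp [hL, Fin.le_def]; omega)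
  have hnonneg : ∀ i : Fin s, 0 ≤ n i := fun i =>
    le_trans hn0 (hmono.monotone (by simp [Fin.le_def]))
  -- shifted exponents
  set r' : Fin s → ℕ := fun i => r i + (if i = L then 1 else 0) with hr'def
  have hr' : ∀ i, 0 < r' i := fun i => lt_of_lt_of_le (hr i) (by simp [hr'def])
  -- the real product functions
  set F : ℝ → ℝ := fun t => ∏ i : Fin s, (t - n i) ^ r i with hF
  set G : ℝ → ℝ := fun t => ∏ i : Fin s, (t - n i) ^ r' i with hG
  have hGF : ∀ t : ℝ, G t = (t - n L) * F t := by
    intro t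
    simp only [hG, hF, hr'def, pow_add, Finset.prod_mul_distrib, pow_ite, pow_one, pow_zero,
      Finset.prod_ite_eq', Finset.mem_univ, if_true]
    ring
  -- polynomial identity
  have hpoly : (∏ i : Fin s, (X - C (n i)) ^ r' i : ℝ[X])
      = (X - C (n L)) * ∏ i : Fin s, (X - C (n i)) ^ r i := by
    simp only [hr'def, pow_add, Finset.prod_mul_distrib, pow_ite, pow_one, pow_zero,
      Finset.prod_ite_eq', Finset.mem_univ, if_true]
    ring
  -- continuity
  have hFc : Continuous F := by
    apply continuous_finset_prod
    exact fun i _ => (continuous_id.sub continuous_const).pow _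
  have hGc : Continuous G := by
    apply continuous_finset_prod
    exact fun i _ => (continuous_id.sub continuous_const).pow _
  -- values at n L and n L + 1
  have hF0 : F (n L) = 0 := by
    apply Finset.prod_eq_zero (Finset.mem_univ L)
    simp [zero_pow (hr L).ne']
  have hG0 : G (n L) = 0 := by
    apply Finset.prod_eq_zero (Finset.mem_univ L)
    simp [zero_pow (hr' L).ne']
  have hF1 : 1 ≤ F (n L + 1) := by
    show (1:ℝ) ≤ ∏ i : Fin s, (n L + 1 - n i) ^ r i
    refine one_le_prod_real _ _ fun i _ => one_le_pow₀ ?_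
    have := hile i; linarith
  have hG1 : 1 ≤ G (n L + 1) := by
    show (1:ℝ) ≤ ∏ i : Fin s, (n L + 1 - n i) ^ r' i
    refine one_le_prod_real _ _ fun i _ => one_le_pow₀ ?_
    have := hile i; linarith
  -- get x with F x = 1
  obtain ⟨x, hxI, hFx⟩ : ∃ x ∈ Set.Icc (n L) (n L + 1), F x = 1 := by
    have := intermediate_value_Icc (by linarith : n L ≤ n L + 1) hFc.continuousOn
    have h1 : (1 : ℝ) ∈ Set.Icc (F (n L)) (F (n L + 1)) := by
      rw [hF0]; exact ⟨zero_le_one, hF1⟩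
    obtain ⟨x, hx1, hx2⟩ := this h1
    exact ⟨x, hx1, hx2⟩
  obtain ⟨y, hyI, hGy⟩ : ∃ y ∈ Set.Icc (n L) (n L + 1), G y = 1 := by
    have := intermediate_value_Icc (by linarith : n L ≤ n L + 1) hGc.continuousOn
    have h1 : (1 : ℝ) ∈ Set.Icc (G (n L)) (G (n L + 1)) := by
      rw [hG0]; exact ⟨zero_le_one, hG1⟩
    obtain ⟨y, hy1, hy2⟩ := this h1
    exact ⟨y, hy1, hy2⟩
  have hxL : n L < x := lt_of_le_of_ne hxI.1 (fun h => by rw [← h, hF0] at hFx; norm_num at hFx)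
  have hyL : n L < y := lt_of_le_of_ne hyI.1 (fun h => by rw [← h, hG0] at hGy; norm_num at hGy)
  have hxall : ∀ i, n i < x := fun i => lt_of_le_of_lt (hile i) hxL
  have hyall : ∀ i, n i < y := fun i => lt_of_le_of_lt (hile i) hyL
  -- rho computations
  have hrho1 : rho (∏ i : Fin s, (X - C (n i)) ^ r i - 1) = x := by
    refine rho_eq _ x (le_trans (hnonneg L) hxL.le) ?_ ?_
    · simpa [eval_prod] using hFx
    · intro z hz h1
      have := aux_est hs r hr n hnonneg x hxall (by simpa [hF] using hFx) z hz
      rw [show (∏ i : Fin s, (z - (n i : ℂ)) ^ r i)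
          = (Polynomial.aeval z) (∏ i : Fin s, (X - C (n i)) ^ r i) by simp [map_prod], h1] at this
      simp at this
  have hrho2 : rho ((X - C (n L)) * (∏ i : Fin s, (X - C (n i)) ^ r i) - 1) = y := by
    rw [← hpoly]
    refine rho_eq _ y (le_trans (hnonneg L) hyL.le) ?_ ?_
    · simpa [eval_prod] using hGy
    · intro z hz h1
      have := aux_est hs r' hr' n hnonneg y hyall (by simpa [hG] using hGy) z hz
      rw [show (∏ i : Fin s, (z - (n i : ℂ)) ^ r' i)
          = (Polynomial.aeval z) (∏ i : Fin s, (X - C (n i)) ^ r' i) by simp [map_prod], h1] at this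
      simp at this
  -- comparison: x ≤ y
  have hGx : G x = x - n L := by rw [hGF, hFx, mul_one]
  have hxy : x ≤ y := by
    by_contra h
    push_neg at h
    have := aux_prod_lt hs r' hr' n y x hyall h
    rw [show ∏ i : Fin s, (y - n i) ^ r' i = G y from rfl,
      show ∏ i : Fin s, (x - n i) ^ r' i = G x from rfl, hGy, hGx] at this
    have := hxI.2
    linarith
  refine ⟨by rw [hrho1, hrho2]; exact hxy, ?_⟩
  rw [hrho1, hrho2]
  constructor
  · -- y = x → s = 1
    intro hyx
    by_contra hne
    have hs2 : 2 ≤ s := by omega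
    -- F (n L + 1) > 1, so x < n L + 1, so G x < 1 = G y, so x < y
    set j : Fin s := ⟨s - 2, by omega⟩ with hj
    have hjL : j ≠ L := by simp [hj, hL, Fin.ext_iff]; omega
    have hjlt : n j < n L := hmono (by simp [hj, hL, Fin.lt_def]; omega)
    have hF1' : 1 < F (n L + 1) := by
      have h1 : (1:ℝ) < (n L + 1 - n j) ^ r j := by
        apply one_lt_pow₀ (by linarith) (hr j).ne'
      have h2 : F (n L + 1) = (n L + 1 - n j) ^ r j *
          ∏ i ∈ Finset.univ.erase j, (n L + 1 - n i) ^ r i :=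
        (Finset.mul_prod_erase Finset.univ (fun i => (n L + 1 - n i) ^ r i)
          (Finset.mem_univ j)).symm
      rw [h2]
      have h3 : (1:ℝ) ≤ ∏ i ∈ Finset.univ.erase j, (n L + 1 - n i) ^ r i := by
        refine one_le_prod_real _ _ fun i _ => one_le_pow₀ ?_
        have := hile i; linarith
      nlinarith
    have hxlt : x < n L + 1 := by
      by_contra h
      push_neg at h
      rcases eq_or_lt_of_le h with h | h
      · rw [h] at hF1'; linarith [hFx]
      · have := aux_prod_lt hs r hr n (n L + 1) x (fun i => by have := hile i; linarith) h
        rw [show ∏ i : Fin s, (x - n i) ^ r i = F x from rfl] at this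
        rw [hFx] at this
        linarith
    have : G x < G y := by rw [hGx, hGy]; linarith
    have hxy' : x < y := by
      by_contra h
      push_neg at h
      rcases eq_or_lt_of_le h with h | h
      · rw [h] at this; linarith
      · have := aux_prod_lt hs r' hr' n y x hyall h
        rw [show ∏ i : Fin s, (y - n i) ^ r' i = G y from rfl,
          show ∏ i : Fin s, (x - n i) ^ r' i = G x from rfl] at this
        linarith
    linarith [hyx, hxy']
  · -- s = 1 → y = x
    intro hs1
    have hallL : ∀ i : Fin s, i = L := fun i => by
      have := i.isLt; apply Fin.ext; simp [hL]; omega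
    have hF1eq : F (n L + 1) = 1 := by
      rw [hF]
      refine Finset.prod_eq_one fun i _ => ?_
      rw [hallL i]; simp
    have hxeq : x = n L + 1 := by
      rcases lt_or_eq_of_le hxI.2 with h | h
      · exfalso
        have := aux_prod_lt hs r hr n x (n L + 1) hxall h
        rw [show ∏ i : Fin s, (x - n i) ^ r i = F x from rfl,
          show ∏ i : Fin s, (n L + 1 - n i) ^ r i = F (n L + 1) from rfl, hFx, hF1eq] at this
        linarith
      · exact h
    have hGxeq : G x = 1 := by rw [hGx, hxeq]; ring
    rcases lt_or_eq_of_le hxy with h | h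
    · exfalso
      have := aux_prod_lt hs r' hr' n x y hxall h
      rw [show ∏ i : Fin s, (x - n i) ^ r' i = G x from rfl,
        show ∏ i : Fin s, (y - n i) ^ r' i = G y from rfl, hGxeq, hGy] at this
      linarith
    · exact h.symm
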